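/- In the canonical poly-provability model for GLP (W the maximal consistent sets containing GLP, w ⊏ₙ u iff ([n]A ∈ w implies A ∈ u), T_w^n with axioms {B : B ∧ [n]B ∈ w}, and w V p iff p ∈ w; forcing: w ⊩ [n]B iff T_u^n ⊢ B for all u with w ⊏ₙ u), we have the truth lemma: for every formula B of ℒ_ω and every w ∈ W, w ⊩ B iff B ∈ w. -/
import Mathlib


/-- Formulas of the polymodal language `ℒ_ω` with a modality `[n]` for each
`n : ℕ`. -/
inductive GFml : Type
  | atom : ℕ → GFml
  | bot  : GFml
  | imp  : GFml → GFml → GFml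
  | box  : ℕ → GFml → GFml
deriving DecidableEq

/-- Negation. -/
def gneg (A : GFml) : GFml := .imp A .bot

/-- Conjunction. -/
def gand (A B : GFml) : GFml := .imp (.imp A (.imp B .bot)) .bot

/-- Boolean evaluation where boxed formulas act as atoms. -/
def gevalCL (v : GFml → Bool) : GFml → Bool
  | .atom n => v (.atom n)
  | .bot => false
  | .imp A B => !(gevalCL v A) || gevalCL v B
  | .box n A => v (.box n A)

/-- Classical tautology in `ℒ_ω`. -/
def GTaut (A : GFml) : Prop := ∀ v, gevalCL v A = true

/-- The axioms of GLP. -/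
inductive GLPAx : GFml → Prop
  | taut {A} : GTaut A → GLPAx A
  | k (n : ℕ) (A B : GFml) :
      GLPAx (.imp (.box n (.imp A B)) (.imp (.box n A) (.box n B)))
  | four (n : ℕ) (A : GFml) : GLPAx (.imp (.box n A) (.box n (.box n A)))
  | lob (n : ℕ) (A : GFml) :
      GLPAx (.imp (.box n (.imp (.box n A) A)) (.box n A))
  | mono (n : ℕ) (A : GFml) : GLPAx (.imp (.box n A) (.box (n + 1) A))
  | picomp (n : ℕ) (A : GFml) :
      GLPAx (.imp (gneg (.box n A)) (.box (n + 1) (gneg (.box n A))))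

/-- GLP: the axioms, their `[0]`-boxes, and modus ponens. -/
inductive GLPprf : GFml → Prop
  | ax {A} : GLPAx A → GLPprf A
  | boxax {A} : GLPAx A → GLPprf (.box 0 A)
  | mp {A B} : GLPprf (.imp A B) → GLPprf A → GLPprf B

/-- A maximal consistent set containing all theorems of GLP. -/
def GMCS (w : Set GFml) : Prop :=
  (∀ A, GLPprf A → A ∈ w) ∧
  (∀ A B, GFml.imp A B ∈ w → A ∈ w → B ∈ w) ∧
  GFml.bot ∉ w ∧
  (∀ A, A ∈ w ∨ GFml.imp A GFml.bot ∈ w)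

/-- The axiom set of the canonical theory `T_w^n`: `{B : B ∧ [n]B ∈ w}`. -/
def canT (w : Set GFml) (n : ℕ) : Set GFml :=
  {B | gand B (.box n B) ∈ w}

/-- `w ⊏ₙ u` in the canonical model: both are maximal consistent sets
containing GLP and `[n]A ∈ w` implies `A ∈ u`. -/
def canRn (n : ℕ) (w u : Set GFml) : Prop :=
  GMCS w ∧ GMCS u ∧ ∀ A, GFml.box n A ∈ w → A ∈ u

/-- Forcing in the canonical poly-provability model for GLP: atoms read off
membership, Boolean commutation, and `w ⊩ [n]B` iff `B` is an axiom of
`T_u^n` for every `u` with `w ⊏ₙ u`. -/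
def gforce : Set GFml → GFml → Prop
  | w, .atom p => GFml.atom p ∈ w
  | _, .bot => False
  | w, .imp A B => gforce w A → gforce w B
  | w, .box n A => ∀ u, canRn n w u → A ∈ canT u n

/- ## Auxiliary development -/

open GFml

/-- Encoding of formulas into ℕ. -/
def gencode : GFml → ℕ
  | .atom n => Nat.pair 0 n
  | .bot => Nat.pair 1 0
  | .imp A B => Nat.pair 2 (Nat.pair (gencode A) (gencode B))
  | .box n A => Nat.pair 3 (Nat.pair n (gencode A))

lemma gencode_inj : Function.Injective gencode := by
  intro A
  induction A with
  | atom n => intro B h; cases B <;> simp [gencode, Nat.pair_eq_pair] at h; simp [h]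
  | bot => intro B h; cases B <;> first | rfl | simp [gencode, Nat.pair_eq_pair] at h
  | imp A B ihA ihB =>
      intro C h; cases C <;> simp [gencode, Nat.pair_eq_pair] at h
      obtain ⟨h1, h2⟩ := h
      rw [ihA h1, ihB h2]
  | box n A ih =>
      intro C h; cases C <;> simp [gencode, Nat.pair_eq_pair] at h
      obtain ⟨h1, h2⟩ := h
      rw [h1, ih h2]

instance : Countable GFml := ⟨gencode, gencode_inj⟩
instance : Nonempty GFml := ⟨.bot⟩

/- ### Tautologies -/

lemma gtaut_prf {A : GFml} (h : GTaut A) : GLPprf A := .ax (.taut h)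

lemma prf_id (A : GFml) : GLPprf (imp A A) := by
  apply gtaut_prf; intro v; cases h : gevalCL v A <;> simp [gevalCL, h]

lemma prf_weak (A B : GFml) : GLPprf (imp B (imp A B)) := by
  apply gtaut_prf; intro v
  cases h : gevalCL v A <;> cases h2 : gevalCL v B <;> simp [gevalCL, h, h2]

lemma prf_dist (A C B : GFml) :
    GLPprf (imp (imp A (imp C B)) (imp (imp A C) (imp A B))) := by
  apply gtaut_prf; intro v
  cases h : gevalCL v A <;> cases h2 : gevalCL v B <;> cases h3 : gevalCL v C <;>
    simp [gevalCL, h, h2, h3]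

lemma prf_dne (A : GFml) : GLPprf (imp (imp (imp A bot) bot) A) := by
  apply gtaut_prf; intro v; cases h : gevalCL v A <;> simp [gevalCL, h]

lemma prf_exfalso (A B : GFml) : GLPprf (imp (imp A bot) (imp A B)) := by
  apply gtaut_prf; intro v
  cases h : gevalCL v A <;> cases h2 : gevalCL v B <;> simp [gevalCL, h, h2]

lemma prf_and_intro (A B : GFml) : GLPprf (imp A (imp B (gand A B))) := by
  apply gtaut_prf; intro v
  cases h : gevalCL v A <;> cases h2 : gevalCL v B <;> simp [gevalCL, gand, h, h2]

lemma prf_and_left (A B : GFml) : GLPprf (imp (gand A B) A) := by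
  apply gtaut_prf; intro v
  cases h : gevalCL v A <;> cases h2 : gevalCL v B <;> simp [gevalCL, gand, h, h2]

/- ### Necessitation -/

lemma prf_box0 {A : GFml} (h : GLPprf A) : GLPprf (box 0 A) := by
  induction h with
  | ax h => exact .boxax h
  | boxax h => exact .mp (.ax (.four 0 _)) (.boxax h)
  | mp h1 h2 ih1 ih2 => exact .mp (.mp (.ax (.k 0 _ _)) ih1) ih2

lemma prf_nec (n : ℕ) {A : GFml} (h : GLPprf A) : GLPprf (box n A) := by
  induction n with
  | zero => exact prf_box0 h
  | succ n ih => exact .mp (.ax (.mono n A)) ih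

/- ### Derivability from a set of hypotheses -/

inductive GLPthm (S : Set GFml) : GFml → Prop
  | thm {A} : GLPprf A → GLPthm S A
  | hyp {A} : A ∈ S → GLPthm S A
  | mp {A B} : GLPthm S (imp A B) → GLPthm S A → GLPthm S B

lemma GLPthm.mono {S T : Set GFml} (hST : S ⊆ T) {A} (h : GLPthm S A) :
    GLPthm T A := by
  induction h with
  | thm h => exact .thm h
  | hyp h => exact .hyp (hST h)
  | mp _ _ ih1 ih2 => exact .mp ih1 ih2

/-- Deduction theorem. -/
lemma deduction {S : Set GFml} {A B : GFml} (h : GLPthm (insert A S) B) :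
    GLPthm S (imp A B) := by
  induction h with
  | @thm C h => exact .mp (.thm (prf_weak A C)) (.thm h)
  | @hyp C h =>
      rcases h with h | h
      · rw [h]; exact .thm (prf_id A)
      · exact .mp (.thm (prf_weak A C)) (.hyp h)
  | @mp C D h1 h2 ih1 ih2 => exact .mp (.mp (.thm (prf_dist A C D)) ih1) ih2

def GCon (S : Set GFml) : Prop := ¬ GLPthm S bot

/- ### Lindenbaum -/

lemma gcon_insert {S : Set GFml} (hS : GCon S) (A : GFml) :
    GCon (insert A S) ∨ GCon (insert (gneg A) S) := by
  by_contra h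
  push_neg at h
  obtain ⟨h1, h2⟩ := h
  rw [GCon, not_not] at h1 h2
  exact hS (.mp (deduction h2) (deduction h1))

open Classical in
noncomputable def lchain (f : ℕ → GFml) (S : Set GFml) : ℕ → Set GFml
  | 0 => S
  | k + 1 =>
      if GCon (insert (f k) (lchain f S k)) then insert (f k) (lchain f S k)
      else insert (gneg (f k)) (lchain f S k)

lemma lchain_mono (f : ℕ → GFml) (S : Set GFml) : Monotone (lchain f S) := by
  apply monotone_nat_of_le_succ
  intro k
  by_cases h : GCon (insert (f k) (lchain f S k)) <;>
    simp [lchain, h, Set.subset_insert]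

lemma lchain_con (f : ℕ → GFml) {S : Set GFml} (hS : GCon S) (k : ℕ) :
    GCon (lchain f S k) := by
  induction k with
  | zero => exact hS
  | succ k ih =>
      by_cases h : GCon (insert (f k) (lchain f S k))
      · simpa [lchain, h] using h
      · rcases gcon_insert ih (f k) with h' | h'
        · exact absurd h' h
        · simpa [lchain, h] using h'

lemma thm_iUnion {C : ℕ → Set GFml} (hC : Monotone C) {A : GFml}
    (h : GLPthm (⋃ k, C k) A) : ∃ k, GLPthm (C k) A := by
  induction h with
  | thm h => exact ⟨0, .thm h⟩
  | hyp h => obtain ⟨k, hk⟩ := Set.mem_iUnion.mp h; exact ⟨k, .hyp hk⟩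
  | mp _ _ ih1 ih2 =>
      obtain ⟨k1, h1⟩ := ih1
      obtain ⟨k2, h2⟩ := ih2
      exact ⟨max k1 k2, .mp (h1.mono (hC (le_max_left k1 k2)))
        (h2.mono (hC (le_max_right k1 k2)))⟩

/-- Lindenbaum lemma. -/
lemma lindenbaum {S : Set GFml} (hS : GCon S) :
    ∃ w, GMCS w ∧ S ⊆ w := by
  obtain ⟨f, hf⟩ := exists_surjective_nat GFml
  set L : Set GFml := ⋃ k, lchain f S k with hL
  have hmono := lchain_mono f S
  have hSL : S ⊆ L := Set.subset_iUnion (lchain f S) 0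
  have hconL : GCon L := by
    intro h
    obtain ⟨k, hk⟩ := thm_iUnion hmono h
    exact lchain_con f hS k hk
  have hcomp : ∀ A, A ∈ L ∨ gneg A ∈ L := by
    intro A
    obtain ⟨k, rfl⟩ := hf A
    by_cases h : GCon (insert (f k) (lchain f S k))
    · left
      exact Set.mem_iUnion.mpr ⟨k + 1, by simp [lchain, h]⟩
    · right
      exact Set.mem_iUnion.mpr ⟨k + 1, by simp [lchain, h]⟩
  have hclosed : ∀ A, GLPthm L A → A ∈ L := by
    intro A hA
    rcases hcomp A with h | h
    · exact h
    · exact absurd (GLPthm.mp (.hyp h) hA) hconL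
  refine ⟨L, ⟨fun A hA => hclosed A (.thm hA),
    fun A B h1 h2 => hclosed B (.mp (.hyp h1) (.hyp h2)),
    fun h => hconL (.hyp h), fun A => hcomp A⟩, hSL⟩

/- ### MCS facts -/

lemma mcs_thm {w : Set GFml} (hw : GMCS w) {A : GFml} (h : GLPprf A) : A ∈ w :=
  hw.1 A h

lemma mcs_mp {w : Set GFml} (hw : GMCS w) {A B : GFml}
    (h1 : imp A B ∈ w) (h2 : A ∈ w) : B ∈ w := hw.2.1 A B h1 h2

lemma mcs_not_mem {w : Set GFml} (hw : GMCS w) {A : GFml} :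
    A ∉ w ↔ gneg A ∈ w := by
  constructor
  · intro h
    rcases hw.2.2.2 A with h' | h'
    · exact absurd h' h
    · exact h'
  · intro h h'
    exact hw.2.2.1 (mcs_mp hw h h')

/-- Boxed deduction: derivability from `{E : [n]E ∈ w}` puts `[n]C` in `w`. -/
lemma thm_box {w : Set GFml} (hw : GMCS w) (n : ℕ) {C : GFml}
    (h : GLPthm {E | box n E ∈ w} C) : box n C ∈ w := by
  induction h with
  | thm h => exact mcs_thm hw (prf_nec n h)
  | hyp h => exact h
  | mp _ _ ih1 ih2 => exact mcs_mp hw (mcs_mp hw (mcs_thm hw (.ax (.k n _ _))) ih1) ih2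

/-- Existence lemma. -/
lemma exists_succ {w : Set GFml} (hw : GMCS w) (n : ℕ) {B : GFml}
    (hB : box n B ∉ w) :
    ∃ u, GMCS u ∧ (∀ A, box n A ∈ w → A ∈ u) ∧ B ∉ u ∧ box n B ∈ u := by
  set S0 : Set GFml := {E | box n E ∈ w} with hS0
  set S1 : Set GFml := insert (gneg B) (insert (box n B) S0) with hS1
  have hcon : GCon S1 := by
    intro h
    have h1 : GLPthm (insert (box n B) S0) (imp (gneg B) bot) := deduction h
    have h2 : GLPthm (insert (box n B) S0) B := .mp (.thm (prf_dne B)) h1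
    have h3 : GLPthm S0 (imp (box n B) B) := deduction h2
    have h4 : box n (imp (box n B) B) ∈ w := thm_box hw n h3
    exact hB (mcs_mp hw (mcs_thm hw (.ax (.lob n B))) h4)
  obtain ⟨u, hu, hsub⟩ := lindenbaum hcon
  refine ⟨u, hu, fun A hA => hsub (by simp [hS1, hS0]; right; right; exact hA), ?_,
    hsub (by simp [hS1])⟩
  have hnB : gneg B ∈ u := hsub (Set.mem_insert _ _)
  exact (mcs_not_mem hu).mpr hnB


/-- Truth lemma for the canonical poly-provability model for GLP: for every
formula `B` and every maximal consistent set `w` containing GLP,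
`w ⊩ B` iff `B ∈ w`. -/
theorem GLP_truth_lemma :
    ∀ (B : GFml) (w : Set GFml), GMCS w → (gforce w B ↔ B ∈ w) := by
  intro B
  induction B with
  | atom p => exact fun w _ => Iff.rfl
  | bot => exact fun w hw => ⟨fun h => h.elim, fun h => absurd h hw.2.2.1⟩
  | imp A B ihA ihB =>
      intro w hw
      have : gforce w (imp A B) ↔ (gforce w A → gforce w B) := Iff.rfl
      rw [this, ihA w hw, ihB w hw]
      constructor
      · intro h
        rcases hw.2.2.2 A with hA | hA
        · exact mcs_mp hw (mcs_thm hw (prf_weak A B)) (h hA)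
        · exact mcs_mp hw (mcs_thm hw (prf_exfalso A B)) hA
      · exact fun h hA => mcs_mp hw h hA
  | box n B ih =>
      intro w hw
      constructor
      · intro h
        by_contra hB
        obtain ⟨u, hu, hR, hBu, _⟩ := exists_succ hw n hB
        exact hBu (mcs_mp hu (mcs_thm hu (prf_and_left B (box n B)))
          (h u ⟨hw, hu, hR⟩))
      · intro h u hRu
        have hu := hRu.2.1
        have hBu : B ∈ u := hRu.2.2 B h
        have hbu : box n B ∈ u :=
          hRu.2.2 _ (mcs_mp hw (mcs_thm hw (.ax (.four n B))) h)
        exact mcs_mp hu (mcs_mp hu (mcs_thm hu (prf_and_intro B (box n B))) hBu) hbu
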